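/- Let X be a standard normal random variable and for each t ∈ ℝ let W(t) = (X + t)·cos(tX) + (t - X)·sin(tX) - exp(-t²/2)·X + t·exp(-t²/2)·(X² - 1). Then for all s, t ∈ ℝ, E[W(s)·W(t)] = (st + 1)·exp(-(s-t)²/2) - (2st + 1)·exp(-(s² + t²)/2). -/

import Mathlib

open MeasureTheory ProbabilityTheory Real

open Filter

open scoped NNReal ENNReal

-- generic integrability of bounded-by-|x|^k functions against the gaussian
lemma integrable_bnd (k : ℕ) (f : ℝ → ℝ) (hc : Continuous f) (hb : ∀ x, |f x| ≤ |x| ^ k) :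
    Integrable (fun x : ℝ => f x * Real.exp (-x^2/2)) := by
  have h0 : Integrable (fun x : ℝ => x ^ (k:ℝ) * Real.exp (-(1/2) * x ^ 2)) :=
    integrable_rpow_mul_exp_neg_mul_sq (by norm_num) (lt_of_lt_of_le (by norm_num) (Nat.cast_nonneg k))
  have h1 : Integrable (fun x : ℝ => |x| ^ k * Real.exp (-x^2/2)) := by
    have := h0.abs
    apply this.congr
    filter_upwards with x
    rw [abs_mul, abs_of_pos (Real.exp_pos _), Real.rpow_natCast, abs_pow, ← abs_pow]
    ring_nf
  apply h1.mono' ((hc.mul (by continuity)).aestronglyMeasurable)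
  filter_upwards with x
  rw [Real.norm_eq_abs, Pi.mul_apply, abs_mul, abs_of_pos (Real.exp_pos _)]
  exact mul_le_mul_of_nonneg_right (hb x) (Real.exp_pos _).le

lemma intC (k : ℕ) (a : ℝ) :
    Integrable (fun x : ℝ => x ^ k * Real.cos (a*x) * Real.exp (-x^2/2)) := by
  apply integrable_bnd k _ (by continuity)
  intro x
  rw [abs_mul, abs_pow]
  calc |x|^k * |Real.cos (a*x)| ≤ |x|^k * 1 :=
        mul_le_mul_of_nonneg_left (Real.abs_cos_le_one _) (by positivity)
    _ = |x|^k := mul_one _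

lemma intS (k : ℕ) (a : ℝ) :
    Integrable (fun x : ℝ => x ^ k * Real.sin (a*x) * Real.exp (-x^2/2)) := by
  apply integrable_bnd k _ (by continuity)
  intro x
  rw [abs_mul, abs_pow]
  calc |x|^k * |Real.sin (a*x)| ≤ |x|^k * 1 :=
        mul_le_mul_of_nonneg_left (Real.abs_sin_le_one _) (by positivity)
    _ = |x|^k := mul_one _

lemma gauss_cexp (a : ℝ) :
    ∫ x : ℝ, Complex.exp (-(1/2:ℂ) * x ^ 2 + (a*Complex.I) * x + 0)
      = ((Real.sqrt (2*π) * Real.exp (-a^2/2) : ℝ) : ℂ) := by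
  rw [integral_cexp_quadratic (by norm_num) (a*Complex.I) 0]
  have h1 : ((π : ℂ) / -(-(1/2:ℂ))) ^ (1/2 : ℂ) = ((Real.sqrt (2*π) : ℝ) : ℂ) := by
    have : ((π : ℂ) / -(-(1/2:ℂ))) = ((2*π : ℝ) : ℂ) := by push_cast; ring
    rw [this, show (1/2:ℂ) = ((1/2:ℝ):ℂ) by norm_num,
      ← Complex.ofReal_cpow (by positivity), Real.sqrt_eq_rpow]
  have h2 : (0 - ((a:ℂ)*Complex.I)^2 / (4 * -(1/2:ℂ))) = ((-a^2/2 : ℝ) : ℂ) := by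
    have : ((a:ℂ)*Complex.I)^2 = -(a:ℂ)^2 := by
      rw [mul_pow, Complex.I_sq]; ring
    rw [this]; push_cast; ring
  rw [h1, h2, ← Complex.ofReal_exp, ← Complex.ofReal_mul]


lemma zre (a x : ℝ) : (-(1/2:ℂ) * x ^ 2 + (a*Complex.I) * x + 0).re = -x^2/2 := by
  simp [← Complex.ofReal_pow]
  ring

lemma zim (a x : ℝ) : (-(1/2:ℂ) * x ^ 2 + (a*Complex.I) * x + 0).im = a*x := by
  simp [← Complex.ofReal_pow]

lemma C0 (a : ℝ) : ∫ x : ℝ, Real.cos (a*x) * Real.exp (-x^2/2)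
    = Real.sqrt (2*π) * Real.exp (-a^2/2) := by
  have hi : Integrable (fun x : ℝ => Complex.exp (-(1/2:ℂ) * x ^ 2 + (a*Complex.I) * x + 0)) :=
    integrable_cexp_quadratic (by norm_num) _ _
  have h := integral_re hi
  rw [gauss_cexp a] at h
  simp only [RCLike.re_to_complex, Complex.ofReal_re] at h
  rw [← h]
  apply integral_congr_ae
  filter_upwards with x
  rw [Complex.exp_re, zre, zim]
  ring

lemma S0 (a : ℝ) : ∫ x : ℝ, Real.sin (a*x) * Real.exp (-x^2/2) = 0 := by
  have hi : Integrable (fun x : ℝ => Complex.exp (-(1/2:ℂ) * x ^ 2 + (a*Complex.I) * x + 0)) :=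
    integrable_cexp_quadratic (by norm_num) _ _
  have h := integral_im hi
  rw [gauss_cexp a] at h
  simp only [RCLike.im_to_complex, Complex.ofReal_im] at h
  rw [← h]
  apply integral_congr_ae
  filter_upwards with x
  rw [Complex.exp_im, zre, zim]
  ring
lemma ibp_gen (f f' : ℝ → ℝ) (hf : ∀ x, HasDerivAt f (f' x) x)
    (hfi : Integrable (fun x => f x * Real.exp (-x^2/2)))
    (hfi' : Integrable (fun x => (f' x - x * f x) * Real.exp (-x^2/2))) :
    ∫ x : ℝ, (f' x - x * f x) * Real.exp (-x^2/2) = 0 := by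
  apply integral_eq_zero_of_hasDerivAt_of_integrable
    (f := fun x => f x * Real.exp (-x^2/2)) ?_ hfi' hfi
  intro x
  have h2 : HasDerivAt (fun y : ℝ => Real.exp (-y^2/2)) (Real.exp (-x^2/2) * (-(2*x^1)/2)) x :=
    ((hasDerivAt_pow 2 x).neg.div_const 2).exp
  have h : HasDerivAt (fun y => f y * Real.exp (-y^2/2)) _ x := (hf x).mul h2
  refine h.congr_deriv ?_
  ring

lemma hdC (k : ℕ) (a x : ℝ) : HasDerivAt (fun y : ℝ => y^k * Real.cos (a*y))
    ((k:ℝ) * x^(k-1) * Real.cos (a*x) - a * (x^k * Real.sin (a*x))) x := by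
  have h : HasDerivAt (fun y : ℝ => y^k * Real.cos (a*y)) _ x :=
    (hasDerivAt_pow k x).mul (((hasDerivAt_id x).const_mul a).cos)
  convert h using 1
  simp only [id_eq, mul_one]
  ring

lemma hdS (k : ℕ) (a x : ℝ) : HasDerivAt (fun y : ℝ => y^k * Real.sin (a*y))
    ((k:ℝ) * x^(k-1) * Real.sin (a*x) + a * (x^k * Real.cos (a*x))) x := by
  have h : HasDerivAt (fun y : ℝ => y^k * Real.sin (a*y)) _ x :=
    (hasDerivAt_pow k x).mul (((hasDerivAt_id x).const_mul a).sin)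
  convert h using 1
  simp only [id_eq, mul_one]
  ring

lemma step (k : ℕ) (a : ℝ) :
    ∫ x : ℝ, x^(k+1) * Real.cos (a*x) * Real.exp (-x^2/2)
      = (k:ℝ) * (∫ x : ℝ, x^(k-1) * Real.cos (a*x) * Real.exp (-x^2/2))
        - a * ∫ x : ℝ, x^k * Real.sin (a*x) * Real.exp (-x^2/2) := by
  have hfi' : Integrable (fun x : ℝ =>
      (((k:ℝ) * x^(k-1) * Real.cos (a*x) - a * (x^k * Real.sin (a*x))) - x * (x^k * Real.cos (a*x)))
        * Real.exp (-x^2/2)) := by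
    apply Integrable.congr
      ((((intC (k-1) a).const_mul k).sub ((intS k a).const_mul a)).sub (intC (k+1) a))
    filter_upwards with x
    simp only [Pi.sub_apply, Pi.add_apply]
    ring
  have h0 := ibp_gen (fun y => y^k * Real.cos (a*y))
    (fun x => (k:ℝ) * x^(k-1) * Real.cos (a*x) - a * (x^k * Real.sin (a*x)))
    (hdC k a) (intC k a) hfi'
  have h1 : ∫ x : ℝ,
      (((k:ℝ) * x^(k-1) * Real.cos (a*x) - a * (x^k * Real.sin (a*x))) - x * (x^k * Real.cos (a*x)))
        * Real.exp (-x^2/2)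
      = ((k:ℝ) * (∫ x : ℝ, x^(k-1) * Real.cos (a*x) * Real.exp (-x^2/2))
        - a * ∫ x : ℝ, x^k * Real.sin (a*x) * Real.exp (-x^2/2))
        - ∫ x : ℝ, x^(k+1) * Real.cos (a*x) * Real.exp (-x^2/2) := by
    have hA : Integrable (fun x : ℝ => (k:ℝ) * (x^(k-1) * Real.cos (a*x) * Real.exp (-x^2/2))
        - a * (x^k * Real.sin (a*x) * Real.exp (-x^2/2))) :=
      (((intC (k-1) a).const_mul k).sub ((intS k a).const_mul a)).congr (ae_of_all _ fun x => rfl)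
    rw [show (∫ x : ℝ,
      (((k:ℝ) * x^(k-1) * Real.cos (a*x) - a * (x^k * Real.sin (a*x))) - x * (x^k * Real.cos (a*x)))
        * Real.exp (-x^2/2))
      = ∫ x : ℝ, (((k:ℝ) * (x^(k-1) * Real.cos (a*x) * Real.exp (-x^2/2))
          - a * (x^k * Real.sin (a*x) * Real.exp (-x^2/2)))
          - x^(k+1) * Real.cos (a*x) * Real.exp (-x^2/2)) from
        integral_congr_ae (by filter_upwards with x; ring),
      integral_sub hA (intC (k+1) a),
      integral_sub ((intC (k-1) a).const_mul k) ((intS k a).const_mul a),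
      integral_const_mul, integral_const_mul]
  rw [h1] at h0
  linarith

lemma stepS (k : ℕ) (a : ℝ) :
    ∫ x : ℝ, x^(k+1) * Real.sin (a*x) * Real.exp (-x^2/2)
      = (k:ℝ) * (∫ x : ℝ, x^(k-1) * Real.sin (a*x) * Real.exp (-x^2/2))
        + a * ∫ x : ℝ, x^k * Real.cos (a*x) * Real.exp (-x^2/2) := by
  have hfi' : Integrable (fun x : ℝ =>
      (((k:ℝ) * x^(k-1) * Real.sin (a*x) + a * (x^k * Real.cos (a*x))) - x * (x^k * Real.sin (a*x)))
        * Real.exp (-x^2/2)) := by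
    apply Integrable.congr
      ((((intS (k-1) a).const_mul k).add ((intC k a).const_mul a)).sub (intS (k+1) a))
    filter_upwards with x
    simp only [Pi.sub_apply, Pi.add_apply]
    ring
  have h0 := ibp_gen (fun y => y^k * Real.sin (a*y))
    (fun x => (k:ℝ) * x^(k-1) * Real.sin (a*x) + a * (x^k * Real.cos (a*x)))
    (hdS k a) (intS k a) hfi'
  have h1 : ∫ x : ℝ,
      (((k:ℝ) * x^(k-1) * Real.sin (a*x) + a * (x^k * Real.cos (a*x))) - x * (x^k * Real.sin (a*x)))
        * Real.exp (-x^2/2)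
      = ((k:ℝ) * (∫ x : ℝ, x^(k-1) * Real.sin (a*x) * Real.exp (-x^2/2))
        + a * ∫ x : ℝ, x^k * Real.cos (a*x) * Real.exp (-x^2/2))
        - ∫ x : ℝ, x^(k+1) * Real.sin (a*x) * Real.exp (-x^2/2) := by
    have hA : Integrable (fun x : ℝ => (k:ℝ) * (x^(k-1) * Real.sin (a*x) * Real.exp (-x^2/2))
        + a * (x^k * Real.cos (a*x) * Real.exp (-x^2/2))) :=
      (((intS (k-1) a).const_mul k).add ((intC k a).const_mul a)).congr (ae_of_all _ fun x => rfl)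
    rw [show (∫ x : ℝ,
      (((k:ℝ) * x^(k-1) * Real.sin (a*x) + a * (x^k * Real.cos (a*x))) - x * (x^k * Real.sin (a*x)))
        * Real.exp (-x^2/2))
      = ∫ x : ℝ, (((k:ℝ) * (x^(k-1) * Real.sin (a*x) * Real.exp (-x^2/2))
          + a * (x^k * Real.cos (a*x) * Real.exp (-x^2/2)))
          - x^(k+1) * Real.sin (a*x) * Real.exp (-x^2/2)) from
        integral_congr_ae (by filter_upwards with x; ring),
      integral_sub hA (intS (k+1) a),
      integral_add ((intS (k-1) a).const_mul k) ((intC k a).const_mul a),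
      integral_const_mul, integral_const_mul]
  rw [h1] at h0
  linarith


lemma B0c (a : ℝ) : ∫ x : ℝ, x^0 * Real.cos (a*x) * Real.exp (-x^2/2)
    = Real.sqrt (2*π) * Real.exp (-a^2/2) := by
  simp only [pow_zero, one_mul]; exact C0 a

lemma B0s (a : ℝ) : ∫ x : ℝ, x^0 * Real.sin (a*x) * Real.exp (-x^2/2) = 0 := by
  simp only [pow_zero, one_mul]; exact S0 a

lemma C1v (a : ℝ) : ∫ x : ℝ, x * Real.cos (a*x) * Real.exp (-x^2/2) = 0 := by
  have h := step 0 a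
  simp only [zero_add, pow_one, Nat.cast_zero, zero_mul, zero_sub] at h
  rw [h]
  simp only [pow_zero, one_mul]
  rw [S0 a]
  ring

lemma S1v (a : ℝ) : ∫ x : ℝ, x * Real.sin (a*x) * Real.exp (-x^2/2)
    = Real.sqrt (2*π) * (a * Real.exp (-a^2/2)) := by
  have h := stepS 0 a
  simp only [zero_add, pow_one, Nat.cast_zero, zero_mul, zero_add] at h
  rw [h]
  simp only [pow_zero, one_mul]
  rw [C0 a]
  ring

lemma C2v (a : ℝ) : ∫ x : ℝ, x^2 * Real.cos (a*x) * Real.exp (-x^2/2)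
    = Real.sqrt (2*π) * ((1-a^2) * Real.exp (-a^2/2)) := by
  have h := step 1 a
  norm_num [pow_one] at h
  rw [h, C0 a, S1v a]
  ring

lemma S2v (a : ℝ) : ∫ x : ℝ, x^2 * Real.sin (a*x) * Real.exp (-x^2/2) = 0 := by
  have h := stepS 1 a
  norm_num [pow_one] at h
  rw [h, S0 a, C1v a]
  ring

lemma C3v (a : ℝ) : ∫ x : ℝ, x^3 * Real.cos (a*x) * Real.exp (-x^2/2) = 0 := by
  have h := step 2 a
  norm_num [pow_one] at h
  rw [h, C1v a, S2v a]
  ring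

lemma S3v (a : ℝ) : ∫ x : ℝ, x^3 * Real.sin (a*x) * Real.exp (-x^2/2)
    = Real.sqrt (2*π) * ((3*a-a^3) * Real.exp (-a^2/2)) := by
  have h := stepS 2 a
  norm_num [pow_one] at h
  rw [h, S1v a, C2v a]
  ring

lemma C4v (a : ℝ) : ∫ x : ℝ, x^4 * Real.cos (a*x) * Real.exp (-x^2/2)
    = Real.sqrt (2*π) * ((3-6*a^2+a^4) * Real.exp (-a^2/2)) := by
  have h := step 3 a
  norm_num [pow_one] at h
  rw [h, C2v a, S3v a]
  ring

lemma intM (k : ℕ) : Integrable (fun x : ℝ => x^k * Real.exp (-x^2/2)) :=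
  (intC k 0).congr (ae_of_all _ fun x => by simp)

lemma M0 : ∫ x : ℝ, Real.exp (-x^2/2) = Real.sqrt (2*π) := by
  have h := C0 0
  simp only [zero_mul, Real.cos_zero, one_mul] at h
  rw [h]; norm_num

lemma M1 : ∫ x : ℝ, x * Real.exp (-x^2/2) = 0 := by
  have h := C1v 0
  simpa using h

lemma M2 : ∫ x : ℝ, x^2 * Real.exp (-x^2/2) = Real.sqrt (2*π) := by
  have h := C2v 0
  simp only [zero_mul, Real.cos_zero, mul_one] at h
  rw [h]; norm_num

lemma M3 : ∫ x : ℝ, x^3 * Real.exp (-x^2/2) = 0 := by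
  have h := C3v 0
  simpa using h

lemma M4 : ∫ x : ℝ, x^4 * Real.exp (-x^2/2) = Real.sqrt (2*π) * 3 := by
  have h := C4v 0
  simp only [zero_mul, Real.cos_zero, mul_one] at h
  rw [h]; norm_num

lemma intGcos (a p3 p2 p1 p0 : ℝ) :
    Integrable (fun x : ℝ => (p3*x^3+p2*x^2+p1*x+p0) * Real.cos (a*x) * Real.exp (-x^2/2)) := by
  apply Integrable.congr ((((((intC 3 a).const_mul p3).add ((intC 2 a).const_mul p2)).add
    ((intC 1 a).const_mul p1)).add ((intC 0 a).const_mul p0)))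
  filter_upwards with x
  simp only [Pi.add_apply]
  ring

lemma intGsin (a p3 p2 p1 p0 : ℝ) :
    Integrable (fun x : ℝ => (p3*x^3+p2*x^2+p1*x+p0) * Real.sin (a*x) * Real.exp (-x^2/2)) := by
  apply Integrable.congr ((((((intS 3 a).const_mul p3).add ((intS 2 a).const_mul p2)).add
    ((intS 1 a).const_mul p1)).add ((intS 0 a).const_mul p0)))
  filter_upwards with x
  simp only [Pi.add_apply]
  ring

lemma intGpoly (p4 p3 p2 p1 p0 : ℝ) :
    Integrable (fun x : ℝ => (p4*x^4+p3*x^3+p2*x^2+p1*x+p0) * Real.exp (-x^2/2)) := by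
  apply Integrable.congr (((((((intM 4).const_mul p4).add ((intM 3).const_mul p3)).add
    ((intM 2).const_mul p2)).add ((intM 1).const_mul p1)).add ((intM 0).const_mul p0)))
  filter_upwards with x
  simp only [Pi.add_apply]
  ring

lemma Gcos (a p3 p2 p1 p0 : ℝ) :
    ∫ x : ℝ, (p3*x^3+p2*x^2+p1*x+p0) * Real.cos (a*x) * Real.exp (-x^2/2)
      = Real.sqrt (2*π) * ((p2*(1-a^2)+p0) * Real.exp (-a^2/2)) := by
  have i3 : Integrable (fun x : ℝ => p3*(x^3 * Real.cos (a*x) * Real.exp (-x^2/2))) :=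
    (intC 3 a).const_mul p3
  have i2 : Integrable (fun x : ℝ => p2*(x^2 * Real.cos (a*x) * Real.exp (-x^2/2))) :=
    (intC 2 a).const_mul p2
  have i1 : Integrable (fun x : ℝ => p1*(x * Real.cos (a*x) * Real.exp (-x^2/2))) :=
    ((intC 1 a).congr (ae_of_all _ fun x => by ring)).const_mul p1
  have i0 : Integrable (fun x : ℝ => p0*(Real.cos (a*x) * Real.exp (-x^2/2))) :=
    ((intC 0 a).congr (ae_of_all _ fun x => by ring)).const_mul p0
  have i32 : Integrable (fun x : ℝ => p3*(x^3 * Real.cos (a*x) * Real.exp (-x^2/2))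
      + p2*(x^2 * Real.cos (a*x) * Real.exp (-x^2/2))) := (i3.add i2).congr (ae_of_all _ fun x => rfl)
  have i321 : Integrable (fun x : ℝ => p3*(x^3 * Real.cos (a*x) * Real.exp (-x^2/2))
      + p2*(x^2 * Real.cos (a*x) * Real.exp (-x^2/2))
      + p1*(x * Real.cos (a*x) * Real.exp (-x^2/2))) := (i32.add i1).congr (ae_of_all _ fun x => rfl)
  rw [show (∫ x : ℝ, (p3*x^3+p2*x^2+p1*x+p0) * Real.cos (a*x) * Real.exp (-x^2/2))
      = ∫ x : ℝ, (p3*(x^3 * Real.cos (a*x) * Real.exp (-x^2/2))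
        + p2*(x^2 * Real.cos (a*x) * Real.exp (-x^2/2))
        + p1*(x * Real.cos (a*x) * Real.exp (-x^2/2))
        + p0*(Real.cos (a*x) * Real.exp (-x^2/2))) from
      integral_congr_ae (ae_of_all _ fun x => by ring),
    integral_add i321 i0, integral_add i32 i1, integral_add i3 i2,
    integral_const_mul, integral_const_mul, integral_const_mul, integral_const_mul,
    C3v, C2v, C1v, C0]
  ring

lemma Gsin (a p3 p2 p1 p0 : ℝ) :
    ∫ x : ℝ, (p3*x^3+p2*x^2+p1*x+p0) * Real.sin (a*x) * Real.exp (-x^2/2)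
      = Real.sqrt (2*π) * ((p3*(3*a-a^3)+p1*a) * Real.exp (-a^2/2)) := by
  have i3 : Integrable (fun x : ℝ => p3*(x^3 * Real.sin (a*x) * Real.exp (-x^2/2))) :=
    (intS 3 a).const_mul p3
  have i2 : Integrable (fun x : ℝ => p2*(x^2 * Real.sin (a*x) * Real.exp (-x^2/2))) :=
    (intS 2 a).const_mul p2
  have i1 : Integrable (fun x : ℝ => p1*(x * Real.sin (a*x) * Real.exp (-x^2/2))) :=
    ((intS 1 a).congr (ae_of_all _ fun x => by ring)).const_mul p1
  have i0 : Integrable (fun x : ℝ => p0*(Real.sin (a*x) * Real.exp (-x^2/2))) :=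
    ((intS 0 a).congr (ae_of_all _ fun x => by ring)).const_mul p0
  have i32 : Integrable (fun x : ℝ => p3*(x^3 * Real.sin (a*x) * Real.exp (-x^2/2))
      + p2*(x^2 * Real.sin (a*x) * Real.exp (-x^2/2))) := (i3.add i2).congr (ae_of_all _ fun x => rfl)
  have i321 : Integrable (fun x : ℝ => p3*(x^3 * Real.sin (a*x) * Real.exp (-x^2/2))
      + p2*(x^2 * Real.sin (a*x) * Real.exp (-x^2/2))
      + p1*(x * Real.sin (a*x) * Real.exp (-x^2/2))) := (i32.add i1).congr (ae_of_all _ fun x => rfl)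
  rw [show (∫ x : ℝ, (p3*x^3+p2*x^2+p1*x+p0) * Real.sin (a*x) * Real.exp (-x^2/2))
      = ∫ x : ℝ, (p3*(x^3 * Real.sin (a*x) * Real.exp (-x^2/2))
        + p2*(x^2 * Real.sin (a*x) * Real.exp (-x^2/2))
        + p1*(x * Real.sin (a*x) * Real.exp (-x^2/2))
        + p0*(Real.sin (a*x) * Real.exp (-x^2/2))) from
      integral_congr_ae (ae_of_all _ fun x => by ring),
    integral_add i321 i0, integral_add i32 i1, integral_add i3 i2,
    integral_const_mul, integral_const_mul, integral_const_mul, integral_const_mul,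
    S3v, S2v, S1v, S0]
  ring

lemma Gpoly (p4 p3 p2 p1 p0 : ℝ) :
    ∫ x : ℝ, (p4*x^4+p3*x^3+p2*x^2+p1*x+p0) * Real.exp (-x^2/2)
      = Real.sqrt (2*π) * (3*p4+p2+p0) := by
  have i4 : Integrable (fun x : ℝ => p4*(x^4 * Real.exp (-x^2/2))) := (intM 4).const_mul p4
  have i3 : Integrable (fun x : ℝ => p3*(x^3 * Real.exp (-x^2/2))) := (intM 3).const_mul p3
  have i2 : Integrable (fun x : ℝ => p2*(x^2 * Real.exp (-x^2/2))) := (intM 2).const_mul p2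
  have i1 : Integrable (fun x : ℝ => p1*(x * Real.exp (-x^2/2))) :=
    ((intM 1).congr (ae_of_all _ fun x => by ring)).const_mul p1
  have i0 : Integrable (fun x : ℝ => p0*(Real.exp (-x^2/2))) :=
    ((intM 0).congr (ae_of_all _ fun x => by ring)).const_mul p0
  have i43 : Integrable (fun x : ℝ => p4*(x^4 * Real.exp (-x^2/2))
      + p3*(x^3 * Real.exp (-x^2/2))) := (i4.add i3).congr (ae_of_all _ fun x => rfl)
  have i432 : Integrable (fun x : ℝ => p4*(x^4 * Real.exp (-x^2/2))
      + p3*(x^3 * Real.exp (-x^2/2)) + p2*(x^2 * Real.exp (-x^2/2))) :=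
    (i43.add i2).congr (ae_of_all _ fun x => rfl)
  have i4321 : Integrable (fun x : ℝ => p4*(x^4 * Real.exp (-x^2/2))
      + p3*(x^3 * Real.exp (-x^2/2)) + p2*(x^2 * Real.exp (-x^2/2))
      + p1*(x * Real.exp (-x^2/2))) := (i432.add i1).congr (ae_of_all _ fun x => rfl)
  rw [show (∫ x : ℝ, (p4*x^4+p3*x^3+p2*x^2+p1*x+p0) * Real.exp (-x^2/2))
      = ∫ x : ℝ, (p4*(x^4 * Real.exp (-x^2/2)) + p3*(x^3 * Real.exp (-x^2/2))
        + p2*(x^2 * Real.exp (-x^2/2)) + p1*(x * Real.exp (-x^2/2))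
        + p0*(Real.exp (-x^2/2))) from
      integral_congr_ae (ae_of_all _ fun x => by ring),
    integral_add i4321 i0, integral_add i432 i1, integral_add i43 i2, integral_add i4 i3,
    integral_const_mul, integral_const_mul, integral_const_mul, integral_const_mul, integral_const_mul,
    M4, M3, M2, M1, M0]
  ring

lemma conv (g : ℝ → ℝ) : ∫ x, g x ∂(gaussianReal 0 1)
    = ∫ x, (Real.sqrt (2*π))⁻¹ * (g x * Real.exp (-x^2/2)) := by
  rw [gaussianReal_of_var_ne_zero 0 one_ne_zero, gaussianPDF_def]
  have h1 : (fun x => ENNReal.ofReal (gaussianPDFReal 0 1 x))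
      = fun x => ((Real.toNNReal (gaussianPDFReal 0 1 x) : ℝ≥0) : ℝ≥0∞) := rfl
  rw [h1, integral_withDensity_eq_integral_smul
    ((measurable_gaussianPDFReal 0 1).real_toNNReal) g]
  apply integral_congr_ae
  filter_upwards with x
  rw [NNReal.smul_def, Real.coe_toNNReal _ (gaussianPDFReal_nonneg 0 1 x)]
  simp only [gaussianPDFReal, NNReal.coe_one, mul_one, sub_zero]
  rw [smul_eq_mul, show -x^2/(2:ℝ) = -(x-0)^2/(2*1) by norm_num]
  ring

lemma isplit9 {f1 f2 f3 f4 f5 f6 f7 f8 f9 : ℝ → ℝ} (h1 : Integrable f1) (h2 : Integrable f2)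
    (h3 : Integrable f3) (h4 : Integrable f4) (h5 : Integrable f5) (h6 : Integrable f6)
    (h7 : Integrable f7) (h8 : Integrable f8) (h9 : Integrable f9) :
    ∫ x : ℝ, (f1 x + f2 x + f3 x + f4 x + f5 x + f6 x + f7 x + f8 x + f9 x)
      = (∫ x : ℝ, f1 x) + (∫ x : ℝ, f2 x) + (∫ x : ℝ, f3 x) + (∫ x : ℝ, f4 x)
        + (∫ x : ℝ, f5 x) + (∫ x : ℝ, f6 x) + (∫ x : ℝ, f7 x) + (∫ x : ℝ, f8 x)
        + (∫ x : ℝ, f9 x) := by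
  have g2 : Integrable (fun x => f1 x + f2 x) := (h1.add h2).congr (ae_of_all _ fun x => rfl)
  have g3 : Integrable (fun x => f1 x + f2 x + f3 x) :=
    (g2.add h3).congr (ae_of_all _ fun x => rfl)
  have g4 : Integrable (fun x => f1 x + f2 x + f3 x + f4 x) :=
    (g3.add h4).congr (ae_of_all _ fun x => rfl)
  have g5 : Integrable (fun x => f1 x + f2 x + f3 x + f4 x + f5 x) :=
    (g4.add h5).congr (ae_of_all _ fun x => rfl)
  have g6 : Integrable (fun x => f1 x + f2 x + f3 x + f4 x + f5 x + f6 x) :=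
    (g5.add h6).congr (ae_of_all _ fun x => rfl)
  have g7 : Integrable (fun x => f1 x + f2 x + f3 x + f4 x + f5 x + f6 x + f7 x) :=
    (g6.add h7).congr (ae_of_all _ fun x => rfl)
  have g8 : Integrable (fun x => f1 x + f2 x + f3 x + f4 x + f5 x + f6 x + f7 x + f8 x) :=
    (g7.add h8).congr (ae_of_all _ fun x => rfl)
  rw [integral_add g8 h9, integral_add g7 h8, integral_add g6 h7, integral_add g5 h6,
    integral_add g4 h5, integral_add g3 h4, integral_add g2 h3, integral_add h1 h2]

theorem stmt_7 (W : ℝ → ℝ → ℝ)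
    (hW : ∀ t x : ℝ, W t x = (x + t) * Real.cos (t * x) + (t - x) * Real.sin (t * x)
      - Real.exp (-t ^ 2 / 2) * x + t * Real.exp (-t ^ 2 / 2) * (x ^ 2 - 1)) :
    ∀ s t : ℝ, (∫ x, W s x * W t x ∂(gaussianReal 0 1))
      = (s * t + 1) * Real.exp (-(s - t) ^ 2 / 2)
        - (2 * s * t + 1) * Real.exp (-(s ^ 2 + t ^ 2) / 2) := by
  intro s t
  rw [conv fun x => W s x * W t x, integral_const_mul]
  have key : ∀ x : ℝ, W s x * W t x * Real.exp (-x^2/2)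
      = (0*x^3 + 1*x^2 + 0*x + s*t) * Real.cos ((s-t)*x) * Real.exp (-x^2/2)
      + (0*x^3 + 0*x^2 + (s-t)*x + 0) * Real.sin ((s-t)*x) * Real.exp (-x^2/2)
      + (0*x^3 + 0*x^2 + (s+t)*x + 0) * Real.cos ((s+t)*x) * Real.exp (-x^2/2)
      + (0*x^3 + (-1)*x^2 + 0*x + s*t) * Real.sin ((s+t)*x) * Real.exp (-x^2/2)
      + ((Real.exp (-t^2/2)*t)*x^3 + (Real.exp (-t^2/2)*(s*t-1))*x^2
          + (Real.exp (-t^2/2)*(-(s+t)))*x + (Real.exp (-t^2/2)*(-(s*t))))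
          * Real.cos (s*x) * Real.exp (-x^2/2)
      + ((Real.exp (-t^2/2)*(-t))*x^3 + (Real.exp (-t^2/2)*(s*t+1))*x^2
          + (Real.exp (-t^2/2)*(t-s))*x + (Real.exp (-t^2/2)*(-(s*t))))
          * Real.sin (s*x) * Real.exp (-x^2/2)
      + ((Real.exp (-s^2/2)*s)*x^3 + (Real.exp (-s^2/2)*(s*t-1))*x^2
          + (Real.exp (-s^2/2)*(-(s+t)))*x + (Real.exp (-s^2/2)*(-(s*t))))
          * Real.cos (t*x) * Real.exp (-x^2/2)
      + ((Real.exp (-s^2/2)*(-s))*x^3 + (Real.exp (-s^2/2)*(s*t+1))*x^2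
          + (Real.exp (-s^2/2)*(s-t))*x + (Real.exp (-s^2/2)*(-(s*t))))
          * Real.sin (t*x) * Real.exp (-x^2/2)
      + ((Real.exp (-s^2/2)*Real.exp (-t^2/2)*(s*t))*x^4
          + (Real.exp (-s^2/2)*Real.exp (-t^2/2)*(-(s+t)))*x^3
          + (Real.exp (-s^2/2)*Real.exp (-t^2/2)*(1-2*s*t))*x^2
          + (Real.exp (-s^2/2)*Real.exp (-t^2/2)*(s+t))*x
          + (Real.exp (-s^2/2)*Real.exp (-t^2/2)*(s*t))) * Real.exp (-x^2/2) := by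
    intro x
    rw [hW s x, hW t x]
    simp only [sub_mul, add_mul, Real.cos_sub, Real.cos_add, Real.sin_sub, Real.sin_add]
    ring
  rw [integral_congr_ae (ae_of_all _ key),
    isplit9 (intGcos (s-t) 0 1 0 (s*t)) (intGsin (s-t) 0 0 (s-t) 0)
      (intGcos (s+t) 0 0 (s+t) 0) (intGsin (s+t) 0 (-1) 0 (s*t))
      (intGcos s (Real.exp (-t^2/2)*t) (Real.exp (-t^2/2)*(s*t-1))
        (Real.exp (-t^2/2)*(-(s+t))) (Real.exp (-t^2/2)*(-(s*t))))
      (intGsin s (Real.exp (-t^2/2)*(-t)) (Real.exp (-t^2/2)*(s*t+1))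
        (Real.exp (-t^2/2)*(t-s)) (Real.exp (-t^2/2)*(-(s*t))))
      (intGcos t (Real.exp (-s^2/2)*s) (Real.exp (-s^2/2)*(s*t-1))
        (Real.exp (-s^2/2)*(-(s+t))) (Real.exp (-s^2/2)*(-(s*t))))
      (intGsin t (Real.exp (-s^2/2)*(-s)) (Real.exp (-s^2/2)*(s*t+1))
        (Real.exp (-s^2/2)*(s-t)) (Real.exp (-s^2/2)*(-(s*t))))
      (intGpoly (Real.exp (-s^2/2)*Real.exp (-t^2/2)*(s*t))
        (Real.exp (-s^2/2)*Real.exp (-t^2/2)*(-(s+t)))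
        (Real.exp (-s^2/2)*Real.exp (-t^2/2)*(1-2*s*t))
        (Real.exp (-s^2/2)*Real.exp (-t^2/2)*(s+t))
        (Real.exp (-s^2/2)*Real.exp (-t^2/2)*(s*t))),
    Gcos (s-t) 0 1 0 (s*t), Gsin (s-t) 0 0 (s-t) 0,
    Gcos (s+t) 0 0 (s+t) 0, Gsin (s+t) 0 (-1) 0 (s*t),
    Gcos s (Real.exp (-t^2/2)*t) (Real.exp (-t^2/2)*(s*t-1))
      (Real.exp (-t^2/2)*(-(s+t))) (Real.exp (-t^2/2)*(-(s*t))),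
    Gsin s (Real.exp (-t^2/2)*(-t)) (Real.exp (-t^2/2)*(s*t+1))
      (Real.exp (-t^2/2)*(t-s)) (Real.exp (-t^2/2)*(-(s*t))),
    Gcos t (Real.exp (-s^2/2)*s) (Real.exp (-s^2/2)*(s*t-1))
      (Real.exp (-s^2/2)*(-(s+t))) (Real.exp (-s^2/2)*(-(s*t))),
    Gsin t (Real.exp (-s^2/2)*(-s)) (Real.exp (-s^2/2)*(s*t+1))
      (Real.exp (-s^2/2)*(s-t)) (Real.exp (-s^2/2)*(-(s*t))),
    Gpoly (Real.exp (-s^2/2)*Real.exp (-t^2/2)*(s*t))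
      (Real.exp (-s^2/2)*Real.exp (-t^2/2)*(-(s+t)))
      (Real.exp (-s^2/2)*Real.exp (-t^2/2)*(1-2*s*t))
      (Real.exp (-s^2/2)*Real.exp (-t^2/2)*(s+t))
      (Real.exp (-s^2/2)*Real.exp (-t^2/2)*(s*t))]
  rw [show Real.exp (-(s ^ 2 + t ^ 2) / 2) = Real.exp (-s^2/2) * Real.exp (-t^2/2) by
    rw [← Real.exp_add]; congr 1; ring]
  have hsqrt : Real.sqrt (2*π) ≠ 0 := ne_of_gt (Real.sqrt_pos.mpr (by positivity))
  field_simp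
  ring
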